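/- Let T=(t_{ij}) be a quasi-transformation matrix of order m ≥ 2 and let Q_T be a quasi-copula satisfying T(Q_T)=Q_T. Let l ∈ ℕ and let R_{i₁,…,i_l;j₁,…,j_l} = ω_{i₁j₁}∘ω_{i₂j₂}∘⋯∘ω_{i_lj_l}([0,1]²). If t_{i_l j_l} = 0, then the restriction of Q_T to R_{i₁,…,i_l;j₁,…,j_l} is affine: there exist real numbers γ₁, γ₂, γ₃ (depending on (i₁,…,i_l), (j₁,…,j_l) and T) such that Q_T(u,v) = γ₁ + γ₂u + γ₃v for all (u,v) in this rectangle. -/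

import Mathlib

open Set MeasureTheory

noncomputable section

/-- A (bivariate) quasi-copula on `[0,1]²`. -/
def IsQuasiCopula (Q : ℝ → ℝ → ℝ) : Prop :=
  (∀ u ∈ Icc (0:ℝ) 1, ∀ v ∈ Icc (0:ℝ) 1, Q u v ∈ Icc (0:ℝ) 1) ∧
  (∀ t ∈ Icc (0:ℝ) 1, Q t 0 = 0 ∧ Q 0 t = 0 ∧ Q t 1 = t ∧ Q 1 t = t) ∧
  (∀ v ∈ Icc (0:ℝ) 1, ∀ u₁ ∈ Icc (0:ℝ) 1, ∀ u₂ ∈ Icc (0:ℝ) 1, u₁ ≤ u₂ → Q u₁ v ≤ Q u₂ v) ∧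
  (∀ u ∈ Icc (0:ℝ) 1, ∀ v₁ ∈ Icc (0:ℝ) 1, ∀ v₂ ∈ Icc (0:ℝ) 1, v₁ ≤ v₂ → Q u v₁ ≤ Q u v₂) ∧
  (∀ u₁ ∈ Icc (0:ℝ) 1, ∀ v₁ ∈ Icc (0:ℝ) 1, ∀ u₂ ∈ Icc (0:ℝ) 1, ∀ v₂ ∈ Icc (0:ℝ) 1,
    |Q u₁ v₁ - Q u₂ v₂| ≤ |u₁ - u₂| + |v₁ - v₂|)

/-- The `Q`-volume of the rectangle `[u₁,u₂] × [v₁,v₂]`. -/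
def QVol (Q : ℝ → ℝ → ℝ) (u₁ u₂ v₁ v₂ : ℝ) : ℝ :=
  Q u₂ v₂ - Q u₂ v₁ - Q u₁ v₂ + Q u₁ v₁

/-- A copula: a quasi-copula all of whose rectangle volumes are nonnegative. -/
def IsCopula (C : ℝ → ℝ → ℝ) : Prop :=
  IsQuasiCopula C ∧
  ∀ u₁ u₂ v₁ v₂ : ℝ, u₁ ∈ Icc (0:ℝ) 1 → u₂ ∈ Icc (0:ℝ) 1 → v₁ ∈ Icc (0:ℝ) 1 →
    v₂ ∈ Icc (0:ℝ) 1 → u₁ ≤ u₂ → v₁ ≤ v₂ → 0 ≤ QVol C u₁ u₂ v₁ v₂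

/-- An interval of `[0,1]` which is open in the relative topology of `[0,1]`. -/
def IsRelOpenInterval (I : Set ℝ) : Prop :=
  I.OrdConnected ∧ ∃ U : Set ℝ, IsOpen U ∧ I = U ∩ Icc 0 1

/-- A rectangle `R = I₁ × I₂` (with `I₁, I₂` relatively open intervals of `[0,1]`) is
open `Q`-null if every closed rectangle contained in it has zero `Q`-volume. -/
def OpenQNull (Q : ℝ → ℝ → ℝ) (R : Set (ℝ × ℝ)) : Prop :=
  (∃ I₁ I₂ : Set ℝ, IsRelOpenInterval I₁ ∧ IsRelOpenInterval I₂ ∧ R = I₁ ×ˢ I₂) ∧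
  ∀ a₁ b₁ a₂ b₂ : ℝ, a₁ ≤ b₁ → a₂ ≤ b₂ → Icc a₁ b₁ ×ˢ Icc a₂ b₂ ⊆ R →
    QVol Q a₁ b₁ a₂ b₂ = 0

/-- The support of a quasi-copula: the complement in `[0,1]²` of the union of all
open `Q`-null rectangles. -/
def suppQ (Q : ℝ → ℝ → ℝ) : Set (ℝ × ℝ) :=
  (Icc (0:ℝ) 1 ×ˢ Icc (0:ℝ) 1) \ ⋃₀ {R | OpenQNull Q R}

/-- `p_k`: the sum of the entries of the first `k` columns of `T` (column index first). -/
def colPart {m : ℕ} (T : Fin m → Fin m → ℝ) (k : ℕ) : ℝ :=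
  ∑ i ∈ Finset.univ.filter (fun i : Fin m => (i : ℕ) < k), ∑ j, T i j

/-- `q_k`: the sum of the entries of the first `k` rows of `T` (rows ordered bottom-to-top). -/
def rowPart {m : ℕ} (T : Fin m → Fin m → ℝ) (k : ℕ) : ℝ :=
  ∑ j ∈ Finset.univ.filter (fun j : Fin m => (j : ℕ) < k), ∑ i, T i j

/-- A quasi-transformation matrix. -/
def IsQTMatrix {m : ℕ} (T : Fin m → Fin m → ℝ) : Prop :=
  (∑ i, ∑ j, T i j = 1) ∧
  (∀ i, 0 < ∑ j, T i j) ∧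
  (∀ j, 0 < ∑ i, T i j) ∧
  (∀ a b c d : ℕ, a ≤ b → b < m → c ≤ d → d < m →
    (a = 0 ∨ b = m - 1 ∨ c = 0 ∨ d = m - 1) →
    0 ≤ ∑ i ∈ Finset.univ.filter (fun i : Fin m => a ≤ (i : ℕ) ∧ (i : ℕ) ≤ b),
        ∑ j ∈ Finset.univ.filter (fun j : Fin m => c ≤ (j : ℕ) ∧ (j : ℕ) ≤ d), T i j)

/-- `F` is the `T`-transformation of the quasi-copula `Q`: on each associated rectangle
`R_{ij} = [p_{i-1},p_i] × [q_{j-1},q_j]` (here `i j : Fin m` are zero-based, so the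
rectangle is `[colPart T i, colPart T (i+1)] × [rowPart T j, rowPart T (j+1)]`),
`F` is given by the `T`-transformation formula. -/
def IsTTrans {m : ℕ} (T : Fin m → Fin m → ℝ) (Q F : ℝ → ℝ → ℝ) : Prop :=
  ∀ i j : Fin m, ∀ u v : ℝ,
    u ∈ Icc (colPart T (i : ℕ)) (colPart T ((i : ℕ) + 1)) →
    v ∈ Icc (rowPart T (j : ℕ)) (rowPart T ((j : ℕ) + 1)) →
    F u v =
      (∑ i' ∈ Finset.univ.filter (fun i' : Fin m => i' < i),
        ∑ j' ∈ Finset.univ.filter (fun j' : Fin m => j' < j), T i' j')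
      + (u - colPart T (i : ℕ)) / (colPart T ((i : ℕ) + 1) - colPart T (i : ℕ)) *
          (∑ j' ∈ Finset.univ.filter (fun j' : Fin m => j' < j), T i j')
      + (v - rowPart T (j : ℕ)) / (rowPart T ((j : ℕ) + 1) - rowPart T (j : ℕ)) *
          (∑ i' ∈ Finset.univ.filter (fun i' : Fin m => i' < i), T i' j)
      + T i j * Q ((u - colPart T (i : ℕ)) / (colPart T ((i : ℕ) + 1) - colPart T (i : ℕ)))
          ((v - rowPart T (j : ℕ)) / (rowPart T ((j : ℕ) + 1) - rowPart T (j : ℕ)))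

/-- The similarity `ω_{ij}` associated with the rectangle `R_{ij}` of `T`. -/
def omegaMap {m : ℕ} (T : Fin m → Fin m → ℝ) (i j : Fin m) : ℝ × ℝ → ℝ × ℝ :=
  fun p =>
    (colPart T (i : ℕ) + (colPart T ((i : ℕ) + 1) - colPart T (i : ℕ)) * p.1,
     rowPart T (j : ℕ) + (rowPart T ((j : ℕ) + 1) - rowPart T (j : ℕ)) * p.2)

/-- A similarity of the plane with ratio `c ∈ (0,1)` (Euclidean distance). -/
def IsSimilarity2 (c : ℝ) (S : ℝ × ℝ → ℝ × ℝ) : Prop :=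
  0 < c ∧ c < 1 ∧ ∀ x y : ℝ × ℝ,
    Real.sqrt (((S x).1 - (S y).1) ^ 2 + ((S x).2 - (S y).2) ^ 2) =
      c * Real.sqrt ((x.1 - y.1) ^ 2 + (x.2 - y.2) ^ 2)

/-- A self-similar subset of the plane. -/
def IsSelfSimilar2 (E : Set (ℝ × ℝ)) : Prop :=
  ∃ (k : ℕ) (S : Fin (k + 1) → ℝ × ℝ → ℝ × ℝ) (c : Fin (k + 1) → ℝ),
    (∀ j, IsSimilarity2 (c j) (S j)) ∧ E = ⋃ j, S j '' E

end


section QTAux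

variable {m : ℕ} (T : Fin m → Fin m → ℝ)

lemma colPart_succ' (i : Fin m) :
    colPart T ((i : ℕ) + 1) = colPart T (i : ℕ) + ∑ j, T i j := by
  unfold colPart
  rw [show (Finset.univ.filter fun i' : Fin m => (i' : ℕ) < (i : ℕ) + 1)
      = insert i (Finset.univ.filter fun i' : Fin m => (i' : ℕ) < (i : ℕ)) from ?_,
    Finset.sum_insert (by simp)]
  · ring
  · ext i'
    simp only [Finset.mem_filter, Finset.mem_insert, Finset.mem_univ, true_and, Fin.ext_iff]
    omega

lemma rowPart_succ' (j : Fin m) :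
    rowPart T ((j : ℕ) + 1) = rowPart T (j : ℕ) + ∑ i, T i j := by
  unfold rowPart
  rw [show (Finset.univ.filter fun j' : Fin m => (j' : ℕ) < (j : ℕ) + 1)
      = insert j (Finset.univ.filter fun j' : Fin m => (j' : ℕ) < (j : ℕ)) from ?_,
    Finset.sum_insert (by simp)]
  · ring
  · ext j'
    simp only [Finset.mem_filter, Finset.mem_insert, Finset.mem_univ, true_and, Fin.ext_iff]
    omega

lemma colPart_nonneg (hT : IsQTMatrix T) (k : ℕ) : 0 ≤ colPart T k :=
  Finset.sum_nonneg fun i _ => (hT.2.1 i).le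

lemma rowPart_nonneg (hT : IsQTMatrix T) (k : ℕ) : 0 ≤ rowPart T k :=
  Finset.sum_nonneg fun j _ => (hT.2.2.1 j).le

lemma colPart_le_one (hT : IsQTMatrix T) (k : ℕ) : colPart T k ≤ 1 := by
  have h1 : colPart T k ≤ ∑ i, ∑ j, T i j := by
    apply Finset.sum_le_sum_of_subset_of_nonneg (Finset.filter_subset _ _)
    intro i _ _
    exact (hT.2.1 i).le
  linarith [hT.1]

lemma rowPart_le_one (hT : IsQTMatrix T) (k : ℕ) : rowPart T k ≤ 1 := by
  have h1 : rowPart T k ≤ ∑ j, ∑ i, T i j := by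
    apply Finset.sum_le_sum_of_subset_of_nonneg (Finset.filter_subset _ _)
    intro j _ _
    exact (hT.2.2.1 j).le
  have h2 : ∑ j, ∑ i, T i j = ∑ i, ∑ j, T i j := Finset.sum_comm
  linarith [hT.1]

lemma colPart_gap_pos (hT : IsQTMatrix T) (i : Fin m) :
    0 < colPart T ((i : ℕ) + 1) - colPart T (i : ℕ) := by
  rw [colPart_succ']
  have := hT.2.1 i
  linarith

lemma rowPart_gap_pos (hT : IsQTMatrix T) (j : Fin m) :
    0 < rowPart T ((j : ℕ) + 1) - rowPart T (j : ℕ) := by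
  rw [rowPart_succ']
  have := hT.2.2.1 j
  linarith

lemma omegaMap_mem_sq (hT : IsQTMatrix T) (i j : Fin m) {x : ℝ × ℝ}
    (hx : x ∈ Icc (0:ℝ) 1 ×ˢ Icc (0:ℝ) 1) :
    omegaMap T i j x ∈ Icc (0:ℝ) 1 ×ˢ Icc (0:ℝ) 1 := by
  obtain ⟨⟨hx11, hx12⟩, hx21, hx22⟩ := hx
  have hp0 := colPart_nonneg T hT (i : ℕ)
  have hp1 := colPart_le_one T hT ((i : ℕ) + 1)
  have hq0 := rowPart_nonneg T hT (j : ℕ)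
  have hq1 := rowPart_le_one T hT ((j : ℕ) + 1)
  have hdp := colPart_gap_pos T hT i
  have hdq := rowPart_gap_pos T hT j
  constructor
  · constructor <;> simp only [omegaMap] <;> nlinarith
  · constructor <;> simp only [omegaMap] <;> nlinarith

/-- Key step: if `Q` is a fixed point of the `T`-transformation and (weighted by `T i j`)
`Q` agrees with an affine function on `E ⊆ [0,1]²`, then `Q` is affine on
`omegaMap T i j '' E`. -/
lemma affine_step {m : ℕ} {T : Fin m → Fin m → ℝ} (hT : IsQTMatrix T)
    {Q : ℝ → ℝ → ℝ} (hfix : IsTTrans T Q Q) (i j : Fin m)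
    (γ₁ γ₂ γ₃ : ℝ) (E : Set (ℝ × ℝ)) (hE : E ⊆ Icc (0:ℝ) 1 ×ˢ Icc (0:ℝ) 1)
    (hγ : ∀ x ∈ E, T i j * Q x.1 x.2 = T i j * (γ₁ + γ₂ * x.1 + γ₃ * x.2)) :
    ∃ δ₁ δ₂ δ₃ : ℝ, ∀ p ∈ omegaMap T i j '' E,
      Q p.1 p.2 = δ₁ + δ₂ * p.1 + δ₃ * p.2 := by
  have hdp := colPart_gap_pos T hT i
  have hdq := rowPart_gap_pos T hT j
  set pI := colPart T (i : ℕ) with hpI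
  set pI1 := colPart T ((i : ℕ) + 1) with hpI1
  set qJ := rowPart T (j : ℕ) with hqJ
  set qJ1 := rowPart T ((j : ℕ) + 1) with hqJ1
  set S := ∑ i' ∈ Finset.univ.filter (fun i' : Fin m => i' < i),
        ∑ j' ∈ Finset.univ.filter (fun j' : Fin m => j' < j), T i' j' with hS
  set A := ∑ j' ∈ Finset.univ.filter (fun j' : Fin m => j' < j), T i j' with hA
  set B := ∑ i' ∈ Finset.univ.filter (fun i' : Fin m => i' < i), T i' j with hB
  refine ⟨S + T i j * γ₁ - (A + T i j * γ₂) / (pI1 - pI) * pI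
      - (B + T i j * γ₃) / (qJ1 - qJ) * qJ,
    (A + T i j * γ₂) / (pI1 - pI), (B + T i j * γ₃) / (qJ1 - qJ), ?_⟩
  rintro p ⟨x, hx, rfl⟩
  obtain ⟨⟨hx11, hx12⟩, hx21, hx22⟩ := hE hx
  have hu : (omegaMap T i j x).1 ∈ Icc pI pI1 := by
    constructor <;> simp only [omegaMap] <;> nlinarith
  have hv : (omegaMap T i j x).2 ∈ Icc qJ qJ1 := by
    constructor <;> simp only [omegaMap] <;> nlinarith
  have key := hfix i j _ _ hu hv
  have e1 : ((omegaMap T i j x).1 - pI) / (pI1 - pI) = x.1 := by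
    simp only [omegaMap]
    field_simp
    rw [hpI, hpI1]
    ring
  have e2 : ((omegaMap T i j x).2 - qJ) / (qJ1 - qJ) = x.2 := by
    simp only [omegaMap]
    field_simp
    rw [hqJ, hqJ1]
    ring
  rw [key, e1, e2, hγ x hx]
  simp only [omegaMap]
  field_simp
  ring

lemma foldr_maps_sq (L : List (ℝ × ℝ → ℝ × ℝ))
    (h : ∀ f ∈ L, ∀ x ∈ Icc (0:ℝ) 1 ×ˢ Icc (0:ℝ) 1, f x ∈ Icc (0:ℝ) 1 ×ˢ Icc (0:ℝ) 1) :
    ∀ x ∈ Icc (0:ℝ) 1 ×ˢ Icc (0:ℝ) 1,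
      (L.foldr (· ∘ ·) id) x ∈ Icc (0:ℝ) 1 ×ˢ Icc (0:ℝ) 1 := by
  induction L with
  | nil => intro x hx; simpa using hx
  | cons a L ih =>
      intro x hx
      simp only [List.foldr_cons, Function.comp_apply]
      exact h a (by simp) _ (ih (fun f hf => h f (by simp [hf])) x hx)

end QTAux

/-- If `T` is a quasi-transformation matrix of order `m ≥ 2`, `Q_T` is a
quasi-copula with `T(Q_T) = Q_T`, and the last index pair of the rectangle
`R_{i₁,…,i_l;j₁,…,j_l} = ω_{i₁j₁} ∘ ⋯ ∘ ω_{i_lj_l}([0,1]²)` satisfies `t_{i_l j_l} = 0`,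
then `Q_T` is affine on that rectangle. -/
theorem qtFixedPoint_affine_on_null_rectangle
    {m : ℕ} (hm : 2 ≤ m) (T : Fin m → Fin m → ℝ) (hT : IsQTMatrix T)
    (Q : ℝ → ℝ → ℝ) (hQ : IsQuasiCopula Q) (hfix : IsTTrans T Q Q)
    (l : ℕ) (I J : Fin (l + 1) → Fin m)
    (hzero : T (I (Fin.last l)) (J (Fin.last l)) = 0) :
    ∃ γ₁ γ₂ γ₃ : ℝ,
      ∀ p ∈ ((List.ofFn fun k => omegaMap T (I k) (J k)).foldr (· ∘ ·) id) ''
          (Icc (0:ℝ) 1 ×ˢ Icc (0:ℝ) 1),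
        Q p.1 p.2 = γ₁ + γ₂ * p.1 + γ₃ * p.2 := by
  induction l with
  | zero =>
    obtain ⟨δ₁, δ₂, δ₃, h⟩ := affine_step hT hfix (I 0) (J 0) 0 0 0
      (Icc (0:ℝ) 1 ×ˢ Icc (0:ℝ) 1) subset_rfl
      (fun x _ => by rw [show T (I 0) (J 0) = 0 from hzero]; ring)
    refine ⟨δ₁, δ₂, δ₃, fun p hp => h p ?_⟩
    simpa [List.ofFn_succ, Function.comp] using hp
  | succ l ih =>
    have hzero' : T ((I ∘ Fin.succ) (Fin.last l)) ((J ∘ Fin.succ) (Fin.last l)) = 0 := by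
      simpa [Fin.succ_last] using hzero
    obtain ⟨γ₁, γ₂, γ₃, h⟩ := ih (I ∘ Fin.succ) (J ∘ Fin.succ) hzero'
    set g := ((List.ofFn fun k : Fin (l + 1) =>
        omegaMap T ((I ∘ Fin.succ) k) ((J ∘ Fin.succ) k)).foldr (· ∘ ·) id) with hg
    have hEsub : g '' (Icc (0:ℝ) 1 ×ˢ Icc (0:ℝ) 1) ⊆ Icc (0:ℝ) 1 ×ˢ Icc (0:ℝ) 1 := by
      rintro p ⟨x, hx, rfl⟩
      refine foldr_maps_sq _ ?_ x hx
      intro f hf y hy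
      rw [List.mem_ofFn] at hf
      obtain ⟨k, rfl⟩ := hf
      exact omegaMap_mem_sq T hT _ _ hy
    obtain ⟨δ₁, δ₂, δ₃, hδ⟩ := affine_step hT hfix (I 0) (J 0) γ₁ γ₂ γ₃
      (g '' (Icc (0:ℝ) 1 ×ˢ Icc (0:ℝ) 1)) hEsub
      (fun x hx => by rw [h x hx])
    refine ⟨δ₁, δ₂, δ₃, fun p hp => hδ p ?_⟩
    have : ((List.ofFn fun k : Fin (l + 2) => omegaMap T (I k) (J k)).foldr (· ∘ ·) id)
        = omegaMap T (I 0) (J 0) ∘ g := by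
      rw [hg]
      simp [List.ofFn_succ, Function.comp]
    rw [this, Set.image_comp] at hp
    exact hp
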